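/- For every symmetric Toeplitz matrix A of order n there exist a permutation matrix P, a positive integer k, and irreducible symmetric Toeplitz matrices A_1,...,A_k such that P^T A P is the block diagonal matrix diag(A_1,...,A_k), and moreover A_i is a principal submatrix of A_j whenever i ≤ j. -/

import Mathlib

/-- `A` is a symmetric Toeplitz matrix: its `(i,j)`-entry depends only on `|i - j|`. -/
def IsSymmToeplitz {m : ℕ} (A : Matrix (Fin m) (Fin m) ℝ) : Prop :=
  ∀ i j k l : Fin m, ((i : ℤ) - (j : ℤ)).natAbs = ((k : ℤ) - (l : ℤ)).natAbs → A i j = A k l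

/-- `A` is a Hankel matrix: its `(i,j)`-entry depends only on `i + j`. -/
def IsHankel {m : ℕ} (A : Matrix (Fin m) (Fin m) ℝ) : Prop :=
  ∀ i j k l : Fin m, (i : ℕ) + (j : ℕ) = (k : ℕ) + (l : ℕ) → A i j = A k l

/-- `A` is reducible: some simultaneous permutation of its rows and columns puts it in
block upper triangular form `[[A₁, A₁₂], [0, A₂]]` with `A₁, A₂` square of order `≥ 1`. -/
def MatReducible {m : ℕ} (A : Matrix (Fin m) (Fin m) ℝ) : Prop :=
  ∃ (σ : Equiv.Perm (Fin m)) (r : ℕ), 0 < r ∧ r < m ∧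
    ∀ i j : Fin m, r ≤ (σ i : ℕ) → (σ j : ℕ) < r → A i j = 0

/-- `A` is irreducible iff it is not reducible. -/
def MatIrreducible {m : ℕ} (A : Matrix (Fin m) (Fin m) ℝ) : Prop :=
  ¬ MatReducible A

attribute [local instance] Classical.propDecidable

noncomputable section ToepAux

variable {n : ℕ} {A : Matrix (Fin n) (Fin n) ℝ}

/-- adjacency relation of the graph of `A` -/
def trel (A : Matrix (Fin n) (Fin n) ℝ) (v w : Fin n) : Prop := A v w ≠ 0

/-- reachability in the graph of `A` -/
def tequ (A : Matrix (Fin n) (Fin n) ℝ) (v w : Fin n) : Prop :=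
  Relation.ReflTransGen (trel A) v w

lemma tsymmE (hA : IsSymmToeplitz A) (v w : Fin n) : A v w = A w v :=
  hA v w w v (by omega)

lemma trel_symm (hA : IsSymmToeplitz A) {v w : Fin n} (h : trel A v w) : trel A w v := by
  unfold trel at *; rw [tsymmE hA w v]; exact h

lemma tequ_refl (v : Fin n) : tequ A v v := Relation.ReflTransGen.refl

lemma tequ_trans {u v w : Fin n} (h1 : tequ A u v) (h2 : tequ A v w) : tequ A u w :=
  Relation.ReflTransGen.trans h1 h2

lemma tequ_symm (hA : IsSymmToeplitz A) {v w : Fin n} (h : tequ A v w) : tequ A w v := by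
  induction h with
  | refl => exact Relation.ReflTransGen.refl
  | tail _ hbc ih => exact Relation.ReflTransGen.head (trel_symm hA hbc) ih

/-- the class of `x`: all vertices reaching `x` -/
def tclass (A : Matrix (Fin n) (Fin n) ℝ) (x : Fin n) : Finset (Fin n) :=
  Finset.univ.filter (fun v => tequ A v x)

lemma mem_tclass {x v : Fin n} : v ∈ tclass A x ↔ tequ A v x := by
  simp [tclass]

lemma self_mem_tclass (x : Fin n) : x ∈ tclass A x := mem_tclass.mpr (tequ_refl x)

lemma tclass_eq (hA : IsSymmToeplitz A) {x y : Fin n} (h : tequ A x y) :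
    tclass A x = tclass A y := by
  ext v
  simp only [mem_tclass]
  exact ⟨fun hv => tequ_trans hv h, fun hv => tequ_trans hv (tequ_symm hA h)⟩

lemma tclass_closed (hA : IsSymmToeplitz A) {x v w : Fin n}
    (hv : v ∈ tclass A x) (hw : A v w ≠ 0) : w ∈ tclass A x := by
  rw [mem_tclass] at hv ⊢
  exact tequ_trans (Relation.ReflTransGen.single (trel_symm hA hw)) hv

/-- representative of a class: its minimum -/
def trep (A : Matrix (Fin n) (Fin n) ℝ) (x : Fin n) : Fin n :=
  (tclass A x).min' ⟨x, self_mem_tclass x⟩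

lemma trep_mem (x : Fin n) : trep A x ∈ tclass A x := Finset.min'_mem _ _

lemma trep_equ (x : Fin n) : tequ A (trep A x) x := mem_tclass.mp (trep_mem x)

lemma trep_le {x w : Fin n} (h : w ∈ tclass A x) : trep A x ≤ w := Finset.min'_le _ _ h

lemma min'_congr {γ : Type*} [LinearOrder γ] {s t : Finset γ} (h : s = t) (hs : s.Nonempty) :
    s.min' hs = t.min' (h ▸ hs) := by subst h; rfl

lemma trep_eq_of_equ (hA : IsSymmToeplitz A) {x y : Fin n} (h : tequ A x y) :
    trep A x = trep A y := by
  unfold trep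
  exact min'_congr (tclass_eq hA h) _

/-- translation lemma: the class of `x` shifted down by `x - y` lands inside the class
of `y`, whenever `y ≤ x` and `x` is the minimum of its class. -/
lemma ttranslate (hA : IsSymmToeplitz A) {x y : Fin n} (hyx : (y : ℕ) ≤ (x : ℕ))
    (hminx : ∀ v ∈ tclass A x, (x : ℕ) ≤ (v : ℕ)) :
    ∀ v, tequ A v x →
      (⟨(v : ℕ) - ((x : ℕ) - (y : ℕ)), by have := v.isLt; omega⟩ : Fin n) ∈ tclass A y := by
  intro v hv
  induction hv using Relation.ReflTransGen.head_induction_on with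
  | refl =>
      have hxy : (⟨(x : ℕ) - ((x : ℕ) - (y : ℕ)), by have := x.isLt; omega⟩ : Fin n) = y :=
        Fin.ext (by simp only; omega)
      rw [hxy]
      exact self_mem_tclass y
  | head h' h'' ih =>
      rename_i a c
      have haC : a ∈ tclass A x := mem_tclass.mpr (Relation.ReflTransGen.head h' h'')
      have hcC : c ∈ tclass A x := mem_tclass.mpr h''
      have hax : (x : ℕ) ≤ (a : ℕ) := hminx a haC
      have hcx : (x : ℕ) ≤ (c : ℕ) := hminx c hcC
      have hne : A c a ≠ 0 := by rw [tsymmE hA c a]; exact h'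
      have hEnt : A (⟨(c : ℕ) - ((x : ℕ) - (y : ℕ)), by have := c.isLt; omega⟩ : Fin n)
          (⟨(a : ℕ) - ((x : ℕ) - (y : ℕ)), by have := a.isLt; omega⟩ : Fin n) = A c a :=
        hA _ _ _ _ (by simp only; omega)
      exact tclass_closed hA ih (by rw [hEnt]; exact hne)

section Blocks

variable (C : Finset (Fin n))

/-- sorted enumeration of a finset of indices -/
def cEnum : Fin C.card ≃o {x // x ∈ C} := C.orderIsoOfFin rfl

/-- sorted enumeration with explicit nat index -/
def cc (p : ℕ) (h : p < C.card) : Fin n := (cEnum C ⟨p, h⟩ : {x // x ∈ C})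

lemma cc_mem (p : ℕ) (h : p < C.card) : cc C p h ∈ C := (cEnum C ⟨p, h⟩).2

lemma cc_lt_cc {p q : ℕ} (hp : p < C.card) (hq : q < C.card) (h : p < q) :
    (cc C p hp : ℕ) < (cc C q hq : ℕ) := by
  have h1 : cEnum C ⟨p, hp⟩ < cEnum C ⟨q, hq⟩ :=
    (cEnum C).strictMono (Fin.mk_lt_mk.mpr h)
  exact Fin.lt_def.mp (Subtype.coe_lt_coe.mpr h1)

lemma cc_inj {p q : ℕ} (hp : p < C.card) (hq : q < C.card)
    (h : (cc C p hp : ℕ) = (cc C q hq : ℕ)) : p = q := by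
  rcases Nat.lt_trichotomy p q with h' | h' | h'
  · have := cc_lt_cc C hp hq h'; omega
  · exact h'
  · have := cc_lt_cc C hq hp h'; omega

lemma cc_congr {p q : ℕ} (hp : p < C.card) (hq : q < C.card) (h : p = q) :
    cc C p hp = cc C q hq := by subst h; rfl

lemma cc_apply_symm {v : Fin n} (hv : v ∈ C) :
    cc C ((cEnum C).symm ⟨v, hv⟩ : Fin C.card) ((cEnum C).symm ⟨v, hv⟩).2 = v := by
  simp [cc]

lemma symm_cc (p : Fin C.card) :
    (cEnum C).symm ⟨cc C (p : ℕ) p.2, cc_mem C (p : ℕ) p.2⟩ = p := by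
  simp [cc]

lemma cc_next_up {p : ℕ} (hp : p < C.card) (hp1 : p + 1 < C.card) {w : Fin n} (hw : w ∈ C)
    (h : (cc C p hp : ℕ) < (w : ℕ)) : (cc C (p+1) hp1 : ℕ) ≤ (w : ℕ) := by
  set r := (cEnum C).symm ⟨w, hw⟩ with hr
  have hwr : (w : ℕ) = ((cEnum C r : {x // x ∈ C}) : Fin n) := by
    rw [hr, OrderIso.apply_symm_apply]
  have h1 : (⟨p, hp⟩ : Fin C.card) < r := by
    by_contra hcon
    push_neg at hcon
    have h2 := (cEnum C).monotone hcon
    have h3 : ((cEnum C r : {x // x ∈ C}) : Fin n) ≤ cc C p hp :=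
      Subtype.coe_le_coe.mpr h2
    rw [Fin.le_def] at h3
    omega
  have h2 : (⟨p+1, hp1⟩ : Fin C.card) ≤ r := by
    rw [Fin.le_def]
    have := Fin.lt_def.mp h1
    simpa using this
  have h3 := (cEnum C).monotone h2
  have h4 : (cc C (p+1) hp1 : Fin n) ≤ ((cEnum C r : {x // x ∈ C}) : Fin n) :=
    Subtype.coe_le_coe.mpr h3
  rw [Fin.le_def] at h4
  omega

lemma cc_next_down {q : ℕ} (hq : q < C.card) (hq1 : q + 1 < C.card) {w : Fin n} (hw : w ∈ C)
    (h : (w : ℕ) < (cc C (q+1) hq1 : ℕ)) : (w : ℕ) ≤ (cc C q hq : ℕ) := by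
  set r := (cEnum C).symm ⟨w, hw⟩ with hr
  have hwr : (w : ℕ) = ((cEnum C r : {x // x ∈ C}) : Fin n) := by
    rw [hr, OrderIso.apply_symm_apply]
  have h1 : r < (⟨q+1, hq1⟩ : Fin C.card) := by
    by_contra hcon
    push_neg at hcon
    have h2 := (cEnum C).monotone hcon
    have h3 : (cc C (q+1) hq1 : Fin n) ≤ ((cEnum C r : {x // x ∈ C}) : Fin n) :=
      Subtype.coe_le_coe.mpr h2
    rw [Fin.le_def] at h3
    omega
  have h2 : r ≤ (⟨q, hq⟩ : Fin C.card) := by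
    rw [Fin.le_def]
    have := Fin.lt_def.mp h1
    simpa using Nat.lt_succ_iff.mp this
  have h3 := (cEnum C).monotone h2
  have h4 : ((cEnum C r : {x // x ∈ C}) : Fin n) ≤ (cc C q hq : Fin n) :=
    Subtype.coe_le_coe.mpr h3
  rw [Fin.le_def] at h4
  omega

variable {C}
variable (hA : IsSymmToeplitz A) (hC : ∀ v ∈ C, ∀ w : Fin n, A v w ≠ 0 → w ∈ C)

include hC in
lemma tC_closed_rtg {v w : Fin n} (hv : v ∈ C) (h : Relation.ReflTransGen (trel A) v w) :
    w ∈ C := by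
  induction h with
  | refl => exact hv
  | tail _ hbc ih => exact hC _ ih _ hbc

include hA hC in
lemma tstep (p q : ℕ) (hpq : p ≤ q) (hq1 : q + 1 < C.card) :
    ∀ (hp : p < C.card) (hq : q < C.card) (hp1 : p + 1 < C.card),
    A (cc C p hp) (cc C q hq) = A (cc C (p+1) hp1) (cc C (q+1) hq1) := by
  intro hp hq hp1
  rcases Nat.eq_or_lt_of_le hpq with rfl | hlt
  · exact hA _ _ _ _ (by omega)
  set a := cc C p hp with ha
  set b := cc C q hq with hb
  set a' := cc C (p+1) hp1 with ha'
  set b' := cc C (q+1) hq1 with hb'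
  have maC : a ∈ C := cc_mem C p hp
  have mbC : b ∈ C := cc_mem C q hq
  have maC' : a' ∈ C := cc_mem C (p+1) hp1
  have mbC' : b' ∈ C := cc_mem C (q+1) hq1
  have e1 : (a : ℕ) < (b : ℕ) := cc_lt_cc C hp hq hlt
  have e2 : (b : ℕ) < (b' : ℕ) := cc_lt_cc C hq hq1 (by omega)
  have e3 : (a : ℕ) < (a' : ℕ) := cc_lt_cc C hp hp1 (by omega)
  have e4 : (a' : ℕ) ≤ (b : ℕ) := by
    rcases Nat.eq_or_lt_of_le (Nat.succ_le_of_lt hlt) with he | he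
    · subst he; rfl
    · exact le_of_lt (cc_lt_cc C hp1 hq he)
  have hbn : (b' : ℕ) < n := b'.isLt
  by_cases h0 : A a b = 0
  · by_cases h1 : A a' b' = 0
    · rw [h0, h1]
    · set w : Fin n := ⟨(a : ℕ) + (b' : ℕ) - (a' : ℕ), by omega⟩ with hwdef
      have hwval : (w : ℕ) = (a : ℕ) + (b' : ℕ) - (a' : ℕ) := rfl
      have hwA : A a w = A a' b' := hA _ _ _ _ (by omega)
      have hwC : w ∈ C := hC _ maC _ (by rw [hwA]; exact h1)
      have hwle : (w : ℕ) ≤ (b : ℕ) := cc_next_down C hq hq1 hwC (by omega)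
      set v : Fin n := ⟨(b : ℕ) + (a' : ℕ) - (b' : ℕ), by omega⟩ with hvdef
      have hvval : (v : ℕ) = (b : ℕ) + (a' : ℕ) - (b' : ℕ) := rfl
      have hvA : A b v = A a' b' := hA _ _ _ _ (by omega)
      have hvC : v ∈ C := hC _ mbC _ (by rw [hvA]; exact h1)
      have hvle : (v : ℕ) ≤ (a : ℕ) := cc_next_down C hp hp1 hvC (by omega)
      exact hA _ _ _ _ (by omega)
  · set u : Fin n := ⟨(b' : ℕ) + (a : ℕ) - (b : ℕ), by omega⟩ with hudef
    have huval : (u : ℕ) = (b' : ℕ) + (a : ℕ) - (b : ℕ) := rfl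
    have huA : A b' u = A a b := hA _ _ _ _ (by omega)
    have huC : u ∈ C := hC _ mbC' _ (by rw [huA]; exact h0)
    have hule : (a' : ℕ) ≤ (u : ℕ) := cc_next_up C hp hp1 huC (by omega)
    set w : Fin n := ⟨(a' : ℕ) + (b : ℕ) - (a : ℕ), by omega⟩ with hwdef
    have hwval : (w : ℕ) = (a' : ℕ) + (b : ℕ) - (a : ℕ) := rfl
    have hwA : A a' w = A a b := hA _ _ _ _ (by omega)
    have hwC : w ∈ C := hC _ maC' _ (by rw [hwA]; exact h0)
    have hwge : (b' : ℕ) ≤ (w : ℕ) := cc_next_up C hq hq1 hwC (by omega)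
    exact hA _ _ _ _ (by omega)

include hA hC in
lemma tshift (e p q : ℕ) (hpq : p ≤ q) (h : q + e < C.card) :
    ∀ (hp : p < C.card) (hq : q < C.card) (hpe : p + e < C.card),
    A (cc C p hp) (cc C q hq) = A (cc C (p+e) hpe) (cc C (q+e) h) := by
  induction e with
  | zero => intro hp hq hpe; rfl
  | succ e ih =>
      intro hp hq hpe
      have h' : q + e < C.card := by omega
      have hpe' : p + e < C.card := by omega
      rw [ih h' hp hq hpe']
      have := tstep hA hC (p+e) (q+e) (by omega) (by omega) hpe' h' (by omega)
      convert this using 2 <;> exact cc_congr C _ _ (by omega)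

include hA hC in
lemma tsorted (p q p' q' : ℕ) (hpq : p ≤ q) (hpq' : p' ≤ q')
    (hd : q - p = q' - p') (hq : q < C.card) (hq' : q' < C.card) :
    ∀ (hp : p < C.card) (hp' : p' < C.card),
    A (cc C p hp) (cc C q hq) = A (cc C p' hp') (cc C q' hq') := by
  intro hp hp'
  rcases le_total p p' with hle | hle
  · have := tshift hA hC (p' - p) p q hpq (by omega) hp hq (by omega)
    rw [this]
    congr 2 <;> omega
  · have := tshift hA hC (p - p') p' q' hpq' (by omega) hp' hq' (by omega)
    rw [this]
    congr 2 <;> omega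

include hA hC in
lemma tblock_toeplitz :
    IsSymmToeplitz (fun p q : Fin C.card => A (cc C (p : ℕ) p.2) (cc C (q : ℕ) q.2)) := by
  intro p q r s h
  simp only
  have hsym : ∀ (v w : Fin n), A v w = A w v := fun v w => hA v w w v (by omega)
  rcases le_total (p : ℕ) (q : ℕ) with hpq | hpq <;>
    rcases le_total (r : ℕ) (s : ℕ) with hrs | hrs
  · exact tsorted hA hC p q r s hpq hrs (by omega) q.2 s.2 p.2 r.2
  · rw [hsym (cc C (r : ℕ) r.2) (cc C (s : ℕ) s.2)]
    exact tsorted hA hC p q s r hpq hrs (by omega) q.2 r.2 p.2 s.2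
  · rw [hsym (cc C (p : ℕ) p.2) (cc C (q : ℕ) q.2)]
    exact tsorted hA hC q p r s hpq hrs (by omega) p.2 s.2 q.2 r.2
  · rw [hsym (cc C (p : ℕ) p.2) (cc C (q : ℕ) q.2), hsym (cc C (r : ℕ) r.2) (cc C (s : ℕ) s.2)]
    exact tsorted hA hC q p s r hpq hrs (by omega) p.2 r.2 q.2 s.2

include hA hC in
lemma tblock_irred (hconn : ∀ v ∈ C, ∀ w ∈ C, tequ A v w) :
    MatIrreducible (fun p q : Fin C.card => A (cc C (p : ℕ) p.2) (cc C (q : ℕ) q.2)) := by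
  rintro ⟨σ, r, hr0, hrm, hz⟩
  have hd : 0 < C.card := by omega
  set p0 : Fin C.card := σ.symm ⟨r, hrm⟩ with hp0
  set q0 : Fin C.card := σ.symm ⟨0, hd⟩ with hq0
  have hsp0 : ((σ p0 : Fin C.card) : ℕ) = r := by rw [hp0, Equiv.apply_symm_apply]
  have hsq0 : ((σ q0 : Fin C.card) : ℕ) = 0 := by rw [hq0, Equiv.apply_symm_apply]
  have main : ∀ v w : Fin n, Relation.ReflTransGen (trel A) v w →
      ∀ hv : v ∈ C, r ≤ ((σ ((cEnum C).symm ⟨v, hv⟩) : Fin C.card) : ℕ) →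
      ∀ hw : w ∈ C, r ≤ ((σ ((cEnum C).symm ⟨w, hw⟩) : Fin C.card) : ℕ) := by
    intro v w hpath
    induction hpath with
    | refl => intro hv h hw; exact h
    | tail hab hbc ih =>
        rename_i b c
        intro hv h hc
        have hb : b ∈ C := tC_closed_rtg hC hv hab
        have hbσ := ih hv h hb
        by_contra hlt
        push_neg at hlt
        have hzero := hz ((cEnum C).symm ⟨b, hb⟩) ((cEnum C).symm ⟨c, hc⟩) hbσ hlt
        simp only at hzero
        rw [cc_apply_symm C hb, cc_apply_symm C hc] at hzero
        exact hbc hzero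
  have hpath : tequ A (cc C (p0 : ℕ) p0.2) (cc C (q0 : ℕ) q0.2) :=
    hconn _ (cc_mem C _ p0.2) _ (cc_mem C _ q0.2)
  have hstart : r ≤ ((σ ((cEnum C).symm ⟨cc C (p0 : ℕ) p0.2, cc_mem C _ p0.2⟩) :
      Fin C.card) : ℕ) := by
    rw [symm_cc C p0]; omega
  have hend := main _ _ hpath (cc_mem C _ p0.2) hstart (cc_mem C _ q0.2)
  rw [symm_cc C q0] at hend
  omega

end Blocks

end ToepAux

section MainProof

attribute [local instance] Classical.propDecidable

theorem stmt_5 (n : ℕ) (A : Matrix (Fin n) (Fin n) ℝ) (hA : IsSymmToeplitz A) :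
    ∃ (k : ℕ) (_ : 0 < k) (d : Fin k → ℕ)
      (blocks : ∀ i : Fin k, Matrix (Fin (d i)) (Fin (d i)) ℝ)
      (e : (Σ i : Fin k, Fin (d i)) ≃ Fin n),
      (∀ x y : Σ i : Fin k, Fin (d i), A (e x) (e y) = Matrix.blockDiagonal' blocks x y) ∧
      (∀ i, IsSymmToeplitz (blocks i)) ∧
      (∀ i, MatIrreducible (blocks i)) ∧
      (∀ i j : Fin k, i ≤ j → ∃ f : Fin (d i) → Fin (d j),
        StrictMono f ∧ ∀ p q : Fin (d i), blocks i p q = blocks j (f p) (f q)) := by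
  rcases Nat.eq_zero_or_pos n with rfl | hn
  · -- empty matrix
    refine ⟨1, one_pos, fun _ => 0, fun _ => 0,
      ⟨fun x => x.2.elim0, fun v => v.elim0, fun x => x.2.elim0, fun v => v.elim0⟩,
      ?_, ?_, ?_, ?_⟩
    · intro x; exact x.2.elim0
    · intro i p; exact p.elim0
    · rintro i ⟨σ, r, hr0, hrm, -⟩; exact Nat.not_lt_zero r hrm
    · intro i j _
      exact ⟨id, strictMono_id, fun p => p.elim0⟩
  · -- the set of class representatives (minima of classes)
    set M : Finset (Fin n) := Finset.image (trep A) Finset.univ with hM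
    have hMne : M.Nonempty := ⟨trep A ⟨0, hn⟩, Finset.mem_image_of_mem _ (Finset.mem_univ _)⟩
    set k := M.card with hkdef
    have hk : 0 < k := Finset.card_pos.mpr hMne
    set Menum : Fin k ≃o {x // x ∈ M} := M.orderIsoOfFin rfl with hMenum
    set μ : Fin k → Fin n := fun i => (Menum i.rev : {x // x ∈ M}) with hμ
    have hμmem : ∀ i, μ i ∈ M := fun i => (Menum i.rev).2
    have hμrep : ∀ i, trep A (μ i) = μ i := by
      intro i
      obtain ⟨u, -, hu⟩ := Finset.mem_image.mp (hμmem i)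
      rw [← hu]
      exact trep_eq_of_equ hA (trep_equ u)
    have hμmin : ∀ i, ∀ v ∈ tclass A (μ i), ((μ i : Fin n) : ℕ) ≤ (v : ℕ) := by
      intro i v hv
      have h1 : trep A v = μ i := by
        rw [← hμrep i]
        exact trep_eq_of_equ hA (mem_tclass.mp hv)
      have h2 := trep_le (A := A) (self_mem_tclass (A := A) v)
      rw [h1] at h2
      exact Fin.le_def.mp h2
    have hclassuniq : ∀ (i j : Fin k) (v : Fin n),
        v ∈ tclass A (μ i) → v ∈ tclass A (μ j) → i = j := by
      intro i j v hvi hvj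
      have h1 : trep A v = μ i := by
        rw [← hμrep i]; exact trep_eq_of_equ hA (mem_tclass.mp hvi)
      have h2 : trep A v = μ j := by
        rw [← hμrep j]; exact trep_eq_of_equ hA (mem_tclass.mp hvj)
      have h3 : μ i = μ j := by rw [← h1, h2]
      have h4 : Menum i.rev = Menum j.rev := Subtype.coe_injective h3
      have h5 : i.rev = j.rev := Menum.injective h4
      exact Fin.rev_injective h5
    -- blocks data
    set d : Fin k → ℕ := fun i => (tclass A (μ i)).card with hd
    set blocks : ∀ i : Fin k, Matrix (Fin (d i)) (Fin (d i)) ℝ :=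
      fun i => fun p q => A (cc (tclass A (μ i)) (p : ℕ) p.2) (cc (tclass A (μ i)) (q : ℕ) q.2)
      with hblocks
    have hCi : ∀ i, ∀ v ∈ tclass A (μ i), ∀ w : Fin n, A v w ≠ 0 → w ∈ tclass A (μ i) :=
      fun i v hv w hw => tclass_closed hA hv hw
    -- the equivalence
    set eTo : (Σ i : Fin k, Fin (d i)) → Fin n :=
      fun x => cc (tclass A (μ x.1)) (x.2 : ℕ) x.2.2 with heTo
    have heToinj : Function.Injective eTo := by
      rintro ⟨i, p⟩ ⟨j, q⟩ h
      simp only [heTo] at h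
      have hij : i = j := by
        refine hclassuniq i j _ (cc_mem _ (p : ℕ) p.2) ?_
        rw [h]; exact cc_mem _ (q : ℕ) q.2
      subst hij
      have : (p : ℕ) = (q : ℕ) := cc_inj _ p.2 q.2 (by rw [h])
      exact congrArg _ (Fin.ext this)
    have heTosurj : Function.Surjective eTo := by
      intro v
      have hx : trep A v ∈ M := Finset.mem_image_of_mem _ (Finset.mem_univ _)
      set i : Fin k := (Menum.symm ⟨trep A v, hx⟩).rev with hi
      have hμi : μ i = trep A v := by
        rw [hμ]
        simp only [hi, Fin.rev_rev, OrderIso.apply_symm_apply]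
      have hvmem : v ∈ tclass A (μ i) := by
        rw [hμi]
        exact mem_tclass.mpr (tequ_symm hA (trep_equ v))
      refine ⟨⟨i, (cEnum (tclass A (μ i))).symm ⟨v, hvmem⟩⟩, ?_⟩
      simp only [heTo]
      exact cc_apply_symm _ hvmem
    refine ⟨k, hk, d, blocks, Equiv.ofBijective eTo ⟨heToinj, heTosurj⟩, ?_, ?_, ?_, ?_⟩
    · -- block diagonal form
      rintro ⟨i, p⟩ ⟨j, q⟩
      show A (eTo ⟨i, p⟩) (eTo ⟨j, q⟩) = Matrix.blockDiagonal' blocks ⟨i, p⟩ ⟨j, q⟩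
      by_cases hij : i = j
      · subst hij
        rw [Matrix.blockDiagonal'_apply_eq]
      · rw [Matrix.blockDiagonal'_apply_ne _ _ _ hij]
        by_contra hne
        exact hij (hclassuniq i j _ (cc_mem _ (p : ℕ) p.2)
          (tclass_closed hA (cc_mem _ (q : ℕ) q.2) (by
            rw [tsymmE hA]; exact hne)))
    · -- Toeplitz blocks
      intro i
      exact tblock_toeplitz hA (hCi i)
    · -- irreducible blocks
      intro i
      refine tblock_irred hA (hCi i) ?_
      intro v hv w hw
      exact tequ_trans (mem_tclass.mp hv) (tequ_symm hA (mem_tclass.mp hw))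
    · -- nesting
      intro i j hij
      have hji : ((μ j : Fin n) : ℕ) ≤ ((μ i : Fin n) : ℕ) := by
        have h1 : j.rev ≤ i.rev := Fin.rev_le_rev.mpr hij
        have h2 := Menum.monotone h1
        exact Fin.le_def.mp (Subtype.coe_le_coe.mpr h2)
      set t : ℕ := ((μ i : Fin n) : ℕ) - ((μ j : Fin n) : ℕ) with ht
      have htr := ttranslate hA hji (hμmin i)
      have hsh : ∀ p : Fin (d i),
          (⟨((cc (tclass A (μ i)) (p : ℕ) p.2 : Fin n) : ℕ) - t, by
            have := (cc (tclass A (μ i)) (p : ℕ) p.2).isLt; omega⟩ : Fin n)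
            ∈ tclass A (μ j) := by
        intro p
        exact htr _ (mem_tclass.mp (cc_mem _ (p : ℕ) p.2))
      set f : Fin (d i) → Fin (d j) :=
        fun p => (cEnum (tclass A (μ j))).symm ⟨_, hsh p⟩ with hf
      have hccf : ∀ p : Fin (d i),
          ((cc (tclass A (μ j)) ((f p : Fin (d j)) : ℕ) (f p).2 : Fin n) : ℕ) =
            ((cc (tclass A (μ i)) (p : ℕ) p.2 : Fin n) : ℕ) - t := by
        intro p
        rw [hf]
        rw [cc_apply_symm]
      have htle : ∀ p : Fin (d i), t ≤ ((cc (tclass A (μ i)) (p : ℕ) p.2 : Fin n) : ℕ) := by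
        intro p
        have := hμmin i _ (cc_mem _ (p : ℕ) p.2)
        omega
      refine ⟨f, ?_, ?_⟩
      · intro p q hpq
        have h1 : ((cc (tclass A (μ i)) (p : ℕ) p.2 : Fin n) : ℕ) <
            ((cc (tclass A (μ i)) (q : ℕ) q.2 : Fin n) : ℕ) :=
          cc_lt_cc _ p.2 q.2 (Fin.lt_def.mp hpq)
        have h2 : ((cc (tclass A (μ j)) ((f p : Fin (d j)) : ℕ) (f p).2 : Fin n) : ℕ) <
            ((cc (tclass A (μ j)) ((f q : Fin (d j)) : ℕ) (f q).2 : Fin n) : ℕ) := by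
          rw [hccf p, hccf q]
          have := htle p
          omega
        have h3 : ((f p : Fin (d j)) : ℕ) < ((f q : Fin (d j)) : ℕ) := by
          rcases Nat.lt_trichotomy ((f p : Fin (d j)) : ℕ) ((f q : Fin (d j)) : ℕ)
            with h' | h' | h'
          · exact h'
          · have := congrArg (fun z : Fin n => (z : ℕ))
              (cc_congr (tclass A (μ j)) (f p).2 (f q).2 h')
            omega
          · have := cc_lt_cc (tclass A (μ j)) (f q).2 (f p).2 h'
            omega
        exact Fin.lt_def.mpr h3
      · intro p q
        show blocks i p q = blocks j (f p) (f q)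
        simp only [hblocks]
        have h1 := hccf p
        have h2 := hccf q
        have h3 := htle p
        have h4 := htle q
        exact (hA _ _ _ _ (by omega)).symm

end MainProof
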